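/- Let D be a Young diagram and fix non-negative integers a, l. The arrows (r,s) \to (k,m) with displacement (-a-1, l), tail (r,s) \in \overline{D} = (Z_{\geq 0})^2 \ D, head (k,m) \in \widehat{D} = Z^2 \ \overline{D}, that cannot be moved north or west (i.e., (k, m+1) \in \overline{D} and (r-1, s) \in \widehat{D}) and satisfy k, m, r, s \geq 0, are in bijection with boxes (k,s) \in D having arm length a and leg length l, via r = k + a + 1 and m = s + l. -/
import Mathlib


/-- A Young diagram: a finite down-closed subset of ℕ². -/
def IsYoung (D : Finset (ℕ × ℕ)) : Prop :=
  ∀ x y x' y', (x, y) ∈ D → x' ≤ x → y' ≤ y → (x', y') ∈ D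

/-- Arm length of a box inside the diagram. -/
def arm (D : Finset (ℕ × ℕ)) (c : ℕ × ℕ) : ℕ :=
  (D.filter fun d => d.2 = c.2 ∧ c.1 < d.1).card

/-- Leg length of a box inside the diagram. -/
def leg (D : Finset (ℕ × ℕ)) (c : ℕ × ℕ) : ℕ :=
  (D.filter fun d => d.1 = c.1 ∧ c.2 < d.2).card

/-- Arm length of a box in the complement of the diagram. -/
def coArm (D : Finset (ℕ × ℕ)) (c : ℕ × ℕ) : ℕ :=
  ((Finset.range c.1).filter fun x' => (x', c.2) ∉ D).card

/-- Leg length of a box in the complement of the diagram. -/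
def coLeg (D : Finset (ℕ × ℕ)) (c : ℕ × ℕ) : ℕ :=
  ((Finset.range c.2).filter fun y' => (c.1, y') ∉ D).card

/-- Membership in the complement of the diagram inside the nonnegative
quadrant, for a lattice point of ℤ². -/
def inBar (D : Finset (ℕ × ℕ)) (c : ℤ × ℤ) : Prop :=
  0 ≤ c.1 ∧ 0 ≤ c.2 ∧ (c.1.toNat, c.2.toNat) ∉ D

/-- Membership in ℤ² minus the complement of the diagram
(i.e. the diagram together with all points with a negative coordinate). -/
def inHat (D : Finset (ℕ × ℕ)) (c : ℤ × ℤ) : Prop := ¬ inBar D c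

/-- Arm length of a complement box given by integer coordinates. -/
def coArmZ (D : Finset (ℕ × ℕ)) (c : ℤ × ℤ) : ℕ :=
  ((Finset.range c.1.toNat).filter fun x' => (x', c.2.toNat) ∉ D).card

/-- Leg length of a complement box given by integer coordinates. -/
def coLegZ (D : Finset (ℕ × ℕ)) (c : ℤ × ℤ) : ℕ :=
  ((Finset.range c.2.toNat).filter fun y' => (c.1.toNat, y') ∉ D).card

lemma interval_eq (T : Finset ℕ) (k : ℕ)
    (h1 : ∀ t ∈ T, k < t)
    (h2 : ∀ t ∈ T, ∀ t', k < t' → t' ≤ t → t' ∈ T) :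
    T = Finset.Ioc k (k + T.card) := by
  have hsub : T ⊆ Finset.Ioc k (k + T.card) := by
    intro t ht
    have hk := h1 t ht
    have hsub2 : Finset.Ioc k t ⊆ T := by
      intro t' ht'
      simp only [Finset.mem_Ioc] at ht'
      exact h2 t ht t' ht'.1 ht'.2
    have := Finset.card_le_card hsub2
    rw [Nat.card_Ioc] at this
    simp only [Finset.mem_Ioc]
    omega
  exact Finset.eq_of_subset_of_card_le hsub (by rw [Nat.card_Ioc]; omega)

lemma arm_char (D : Finset (ℕ × ℕ)) (hD : IsYoung D) (k s x : ℕ) :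
    ((x, s) ∈ D ∧ k < x) ↔ (k < x ∧ x ≤ k + arm D (k, s)) := by
  have hmem : ∀ y, y ∈ (D.filter fun d => d.2 = s ∧ k < d.1).image Prod.fst ↔
      ((y, s) ∈ D ∧ k < y) := by
    intro y
    simp only [Finset.mem_image, Finset.mem_filter]
    constructor
    · rintro ⟨⟨dx, dy⟩, ⟨hdD, hds, hdk⟩, rfl⟩
      subst hds; exact ⟨hdD, hdk⟩
    · rintro ⟨h1, h2⟩
      exact ⟨(y, s), ⟨h1, rfl, h2⟩, rfl⟩
  have hcard : ((D.filter fun d => d.2 = s ∧ k < d.1).image Prod.fst).card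
      = arm D (k, s) := by
    apply Finset.card_image_of_injOn
    intro d hd e he hde
    simp only [Finset.mem_coe, Finset.mem_filter] at hd he
    exact Prod.ext hde (hd.2.1.trans he.2.1.symm)
  have heq := interval_eq _ k (fun t ht => ((hmem t).1 ht).2)
    (fun t ht t' h1 h2 => (hmem t').2 ⟨hD _ _ _ _ ((hmem t).1 ht).1 h2 le_rfl, h1⟩)
  rw [← hmem x, heq, hcard, Finset.mem_Ioc]

lemma leg_char (D : Finset (ℕ × ℕ)) (hD : IsYoung D) (k s y : ℕ) :
    ((k, y) ∈ D ∧ s < y) ↔ (s < y ∧ y ≤ s + leg D (k, s)) := by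
  have hmem : ∀ z, z ∈ (D.filter fun d => d.1 = k ∧ s < d.2).image Prod.snd ↔
      ((k, z) ∈ D ∧ s < z) := by
    intro z
    simp only [Finset.mem_image, Finset.mem_filter]
    constructor
    · rintro ⟨⟨dx, dy⟩, ⟨hdD, hds, hdk⟩, rfl⟩
      subst hds; exact ⟨hdD, hdk⟩
    · rintro ⟨h1, h2⟩
      exact ⟨(k, z), ⟨h1, rfl, h2⟩, rfl⟩
  have hcard : ((D.filter fun d => d.1 = k ∧ s < d.2).image Prod.snd).card
      = leg D (k, s) := by
    apply Finset.card_image_of_injOn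
    intro d hd e he hde
    simp only [Finset.mem_coe, Finset.mem_filter] at hd he
    exact Prod.ext (hd.2.1.trans he.2.1.symm) hde
  have heq := interval_eq _ s (fun t ht => ((hmem t).1 ht).2)
    (fun t ht t' h1 h2 => (hmem t').2 ⟨hD _ _ _ _ ((hmem t).1 ht).1 le_rfl h2, h1⟩)
  rw [← hmem y, heq, hcard, Finset.mem_Ioc]

theorem arrows_boxes_inside (D : Finset (ℕ × ℕ)) (hD : IsYoung D) (a l : ℕ) :
    ∀ r s k m : ℤ,
      (k = r - (a + 1) ∧ m = s + l ∧ inBar D (r, s) ∧ inHat D (k, m) ∧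
       inBar D (k, m + 1) ∧ inHat D (r - 1, s) ∧ 0 ≤ k ∧ 0 ≤ m ∧ 0 ≤ r ∧ 0 ≤ s)
      ↔ (0 ≤ k ∧ 0 ≤ s ∧ (k.toNat, s.toNat) ∈ D ∧
         arm D (k.toNat, s.toNat) = a ∧ leg D (k.toNat, s.toNat) = l ∧
         r = k + (a + 1) ∧ m = s + l) := by
  intro r s k m
  simp only [inBar, inHat, not_and, not_not]
  constructor
  · rintro ⟨hk, hm, ⟨hr0, hs0, hrs⟩, hkm, hkm1, hr1s, hk0, hm0, _, _⟩
    have hKM : (k.toNat, m.toNat) ∈ D := hkm hk0 hm0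
    have hr10 : (0:ℤ) ≤ r - 1 := by omega
    have hR1S : ((r-1).toNat, s.toNat) ∈ D := hr1s hr10 hs0
    have hKM1 : (k.toNat, (m+1).toNat) ∉ D := hkm1.2.2
    -- translate coordinates
    have er1 : (r-1).toNat = k.toNat + a := by omega
    have er : r.toNat = k.toNat + (a + 1) := by omega
    have em : m.toNat = s.toNat + l := by omega
    have em1 : (m+1).toNat = s.toNat + l + 1 := by omega
    rw [er1] at hR1S
    rw [er] at hrs
    rw [em] at hKM
    rw [em1] at hKM1
    have hKS : (k.toNat, s.toNat) ∈ D := hD _ _ _ _ hKM le_rfl (by omega)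
    refine ⟨hk0, hs0, hKS, ?_, ?_, by omega, hm⟩
    · -- arm = a
      have h1 : ¬ (k.toNat < k.toNat + (a+1) ∧ k.toNat + (a+1) ≤ k.toNat + arm D (k.toNat, s.toNat)) := by
        rw [← arm_char D hD]
        tauto
      have h2 : a ≤ arm D (k.toNat, s.toNat) := by
        rcases Nat.eq_zero_or_pos a with ha | ha
        · omega
        · have := (arm_char D hD k.toNat s.toNat (k.toNat + a)).1 ⟨hR1S, by omega⟩
          omega
      omega
    · -- leg = l
      have h1 : ¬ (s.toNat < s.toNat + (l+1) ∧ s.toNat + (l+1) ≤ s.toNat + leg D (k.toNat, s.toNat)) := by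
        rw [← leg_char D hD]
        tauto
      have h2 : l ≤ leg D (k.toNat, s.toNat) := by
        rcases Nat.eq_zero_or_pos l with hl | hl
        · omega
        · have := (leg_char D hD k.toNat s.toNat (s.toNat + l)).1 ⟨hKM, by omega⟩
          omega
      omega
  · rintro ⟨hk0, hs0, hKS, harm, hleg, hr, hm⟩
    have hr0 : (0:ℤ) ≤ r := by omega
    have hm0 : (0:ℤ) ≤ m := by omega
    have er : r.toNat = k.toNat + (a + 1) := by omega
    have er1 : (r-1).toNat = k.toNat + a := by omega
    have em : m.toNat = s.toNat + l := by omega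
    have em1 : (m+1).toNat = s.toNat + l + 1 := by omega
    have hRS : (k.toNat + (a+1), s.toNat) ∉ D := by
      intro h
      have := (arm_char D hD k.toNat s.toNat (k.toNat + (a+1))).1 ⟨h, by omega⟩
      omega
    have hKM1 : (k.toNat, s.toNat + l + 1) ∉ D := by
      intro h
      have := (leg_char D hD k.toNat s.toNat (s.toNat + l + 1)).1 ⟨h, by omega⟩
      omega
    have hKM : (k.toNat, s.toNat + l) ∈ D := by
      rcases Nat.eq_zero_or_pos l with hl | hl
      · rw [hl]; simpa using hKS
      · exact ((leg_char D hD k.toNat s.toNat (s.toNat + l)).2 (by omega)).1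
    have hR1S : (k.toNat + a, s.toNat) ∈ D := by
      rcases Nat.eq_zero_or_pos a with ha | ha
      · rw [ha]; simpa using hKS
      · exact ((arm_char D hD k.toNat s.toNat (k.toNat + a)).2 (by omega)).1
    exact ⟨by omega, by omega, ⟨hr0, hs0, by rw [er]; exact hRS⟩,
      fun _ _ => by rw [em]; exact hKM, ⟨by omega, by omega, by rw [em1]; exact hKM1⟩,
      fun _ _ => by rw [er1]; exact hR1S, by omega, by omega, by omega, by omega⟩
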